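/- Let S ⊆ ℝ^d be compact with reach(S) ≥ r > 0 and let x ∉ S with 0 < dist(x, S) < r. Let ξ(x) denote the unique nearest point of x in S, and set η = (x − ξ(x))/‖x − ξ(x)‖ and y = ξ(x) + r η. Then x lies in the open ball int B(y, r) and int B(y, r) ∩ S = ∅. -/

import Mathlib

open Metric Set
open scoped RealInnerProductSpace

/-- `reach(S) ≥ r`: every point at distance `< r` from `S` has a unique nearest point
in `S`. -/
def ReachGe {d : ℕ} (S : Set (EuclideanSpace ℝ (Fin d))) (r : ℝ) : Prop :=
  ∀ x : EuclideanSpace ℝ (Fin d), Metric.infDist x S < r →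
    ∃! y, y ∈ S ∧ dist x y = Metric.infDist x S

section Aux

variable {E : Type*} [NormedAddCommGroup E] [InnerProductSpace ℝ E]

/-- One Euler step along the normal direction: pointwise lower bound. -/
lemma step_pointwise {S : Set E} {w q : E} {m h eps : ℝ}
    (hm : 0 < m) (hdq : dist w q = m) (hinf : Metric.infDist w S = m)
    (hh : 0 < h) (heps : 0 ≤ eps)
    (hnear : ∀ p ∈ S, dist w p ≤ m + 2 * h → dist p q ≤ eps)
    {p : E} (hp : p ∈ S) :
    (m + h) ^ 2 - eps ^ 2 * h / m ≤ dist (w + (h / m) • (w - q)) p ^ 2 := by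
  have hwq : ‖w - q‖ = m := by rw [← dist_eq_norm]; exact hdq
  have hlm : (0:ℝ) < h / m := div_pos hh hm
  have hsmul : ‖(h / m) • (w - q)‖ = h := by
    rw [norm_smul, Real.norm_eq_abs, abs_of_pos hlm, hwq, div_mul_cancel₀ _ hm.ne']
  rcases le_or_gt (dist w p) (m + 2 * h) with hcase | hcase
  · -- near case
    have hb : ‖p - q‖ ≤ eps := by rw [← dist_eq_norm]; exact hnear p hp hcase
    have hb0 : (0:ℝ) ≤ ‖p - q‖ := norm_nonneg _
    have hm_le : m ≤ ‖w - p‖ := by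
      rw [← dist_eq_norm, ← hinf]; exact Metric.infDist_le_dist_of_mem hp
    have hexp : ‖w - p‖ ^ 2 = ‖w - q‖ ^ 2 - 2 * ⟪w - q, p - q⟫ + ‖p - q‖ ^ 2 := by
      have hwp : w - p = (w - q) - (p - q) := by abel
      rw [hwp, norm_sub_sq_real]
    have hc : 2 * ⟪w - q, p - q⟫ ≤ ‖p - q‖ ^ 2 := by nlinarith [hm_le, hwq, norm_nonneg (w - p)]
    have hrw : w + (h / m) • (w - q) - p = (1 + h / m) • (w - q) - (p - q) := by
      rw [add_smul, one_smul]; abel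
    have hnormsq : dist (w + (h / m) • (w - q)) p ^ 2 =
        (1 + h / m) ^ 2 * m ^ 2 - 2 * ((1 + h / m) * ⟪w - q, p - q⟫) + ‖p - q‖ ^ 2 := by
      rw [dist_eq_norm, hrw, norm_sub_sq_real, real_inner_smul_left, norm_smul,
        Real.norm_eq_abs, abs_of_pos (by positivity : (0:ℝ) < 1 + h / m), hwq]
      ring
    have hdiv : eps ^ 2 * h / m = eps ^ 2 * (h / m) := by ring
    have hhm : (h / m) * m = h := div_mul_cancel₀ _ hm.ne'
    have h2 : ‖p - q‖ ^ 2 ≤ eps ^ 2 := pow_le_pow_left₀ hb0 hb 2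
    have h1 : (1 + h / m) * (2 * ⟪w - q, p - q⟫) ≤ (1 + h / m) * ‖p - q‖ ^ 2 :=
      mul_le_mul_of_nonneg_left hc (by positivity)
    have h3 : (h / m) * ‖p - q‖ ^ 2 ≤ (h / m) * eps ^ 2 :=
      mul_le_mul_of_nonneg_left h2 hlm.le
    nlinarith [h1, h3, hlm.le]
  · -- far case
    have hfar : m + h ≤ ‖w + (h / m) • (w - q) - p‖ := by
      have hrw : w + (h / m) • (w - q) - p = (w - p) + (h / m) • (w - q) := by abel
      have htri : ‖w - p‖ - ‖-((h / m) • (w - q))‖ ≤ ‖(w - p) - (-((h / m) • (w - q)))‖ :=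
        norm_sub_norm_le _ _
      rw [norm_neg, sub_neg_eq_add, hsmul] at htri
      have : dist w p = ‖w - p‖ := dist_eq_norm _ _
      rw [hrw]; linarith
    have h0 : (0:ℝ) ≤ m + h := by positivity
    have hsq : (m + h) ^ 2 ≤ dist (w + (h / m) • (w - q)) p ^ 2 := by
      rw [dist_eq_norm]; exact pow_le_pow_left₀ h0 hfar 2
    have heps2 : (0:ℝ) ≤ eps ^ 2 * h / m := by positivity
    linarith

/-- One Euler step along the normal direction: `infDist` lower bound. -/
lemma step_infDist {S : Set E} (hS : IsCompact S) (hne : S.Nonempty) {w q : E} {m h eps : ℝ}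
    (hm : 0 < m) (hdq : dist w q = m) (hinf : Metric.infDist w S = m)
    (hh : 0 < h) (heps : 0 ≤ eps)
    (hnear : ∀ p ∈ S, dist w p ≤ m + 2 * h → dist p q ≤ eps) :
    (m + h) ^ 2 - eps ^ 2 * h / m ≤ Metric.infDist (w + (h / m) • (w - q)) S ^ 2 := by
  obtain ⟨q', hq'S, hq'⟩ := hS.exists_infDist_eq_dist hne (w + (h / m) • (w - q))
  rw [hq']
  exact step_pointwise hm hdq hinf hh heps hnear hq'S

end Aux

section Mod

variable {E : Type*} [MetricSpace E] [ProperSpace E]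

/-- Uniform modulus: on a compact region with unique nearest points, near-minimizers
of the distance are uniformly close to each other. -/
lemma modulus {S : Set E} (hS : IsCompact S) {r : ℝ}
    (hu : ∀ w : E, Metric.infDist w S < r → ∀ p ∈ S, ∀ p' ∈ S,
      dist w p = Metric.infDist w S → dist w p' = Metric.infDist w S → p = p')
    {x : E} {τ : ℝ} (hτ : 0 ≤ τ) (hτr : Metric.infDist x S + τ < r) {ε : ℝ} (hε : 0 < ε) :
    ∃ δ > 0, ∀ w : E, dist w x ≤ τ → ∀ p ∈ S, ∀ p' ∈ S,
      dist w p ≤ Metric.infDist w S + δ → dist w p' ≤ Metric.infDist w S + δ →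
        dist p p' ≤ ε := by
  by_contra hcon
  push_neg at hcon
  have hseq : ∀ n : ℕ, ∃ w, dist w x ≤ τ ∧ ∃ p, p ∈ S ∧ ∃ p', p' ∈ S ∧
      (dist w p ≤ Metric.infDist w S + 1 / (n + 1) ∧
       dist w p' ≤ Metric.infDist w S + 1 / (n + 1) ∧ ε < dist p p') := by
    intro n
    obtain ⟨w, hw, p, hpS, p', hp'S, h1, h2, h3⟩ := hcon (1 / (n + 1)) (by positivity)
    exact ⟨w, hw, p, hpS, p', hp'S, h1, h2, h3⟩
  choose w hw p hpS p' hp'S hp1 hp2 hpp' using hseq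
  obtain ⟨w0, hw0K, φ1, hφ1, hw0⟩ :=
    (isCompact_closedBall x τ).tendsto_subseq (x := w)
      (fun n => Metric.mem_closedBall.mpr (hw n))
  obtain ⟨p0, hp0S, φ2, hφ2, hp0⟩ := hS.tendsto_subseq (x := fun n => p (φ1 n)) (fun n => hpS _)
  obtain ⟨p0', hp0'S, φ3, hφ3, hp0'⟩ :=
    hS.tendsto_subseq (x := fun n => p' (φ1 (φ2 n))) (fun n => hp'S _)
  set ψ : ℕ → ℕ := fun n => φ1 (φ2 (φ3 n)) with hψdef
  have hψ23 : StrictMono (fun n => φ2 (φ3 n)) := hφ2.comp hφ3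
  have hwlim : Filter.Tendsto (fun n => w (ψ n)) Filter.atTop (nhds w0) :=
    hw0.comp hψ23.tendsto_atTop
  have hplim : Filter.Tendsto (fun n => p (ψ n)) Filter.atTop (nhds p0) :=
    hp0.comp hφ3.tendsto_atTop
  have hp'lim : Filter.Tendsto (fun n => p' (ψ n)) Filter.atTop (nhds p0') := hp0'
  have hψtop : Filter.Tendsto ψ Filter.atTop Filter.atTop :=
    (hφ1.comp hψ23).tendsto_atTop
  have hIlim : Filter.Tendsto (fun n => Metric.infDist (w (ψ n)) S + 1 / (ψ n + 1))
      Filter.atTop (nhds (Metric.infDist w0 S + 0)) := by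
    apply Filter.Tendsto.add
    · exact ((Metric.continuous_infDist_pt S).tendsto w0).comp hwlim
    · exact tendsto_one_div_add_atTop_nhds_zero_nat.comp hψtop
  have h1 : dist w0 p0 = Metric.infDist w0 S := by
    refine le_antisymm ?_ (Metric.infDist_le_dist_of_mem hp0S)
    have := le_of_tendsto_of_tendsto' (hwlim.dist hplim) hIlim (fun n => hp1 (ψ n))
    simpa using this
  have h2 : dist w0 p0' = Metric.infDist w0 S := by
    refine le_antisymm ?_ (Metric.infDist_le_dist_of_mem hp0'S)
    have := le_of_tendsto_of_tendsto' (hwlim.dist hp'lim) hIlim (fun n => hp2 (ψ n))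
    simpa using this
  have hwr : Metric.infDist w0 S < r := by
    have h3 : Metric.infDist w0 S ≤ Metric.infDist x S + dist w0 x :=
      Metric.infDist_le_infDist_add_dist
    have h4 : dist w0 x ≤ τ := Metric.mem_closedBall.mp hw0K
    linarith
  have heq : p0 = p0' := hu w0 hwr p0 hp0S p0' hp0'S h1 h2
  have hεle : ε ≤ dist p0 p0' :=
    le_of_tendsto_of_tendsto' tendsto_const_nhds (hplim.dist hp'lim)
      (fun n => (hpp' (ψ n)).le)
  rw [heq, dist_self] at hεle
  linarith

end Mod

/-- Scalar extraction: from a lower bound on the square of the new distance,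
extract a linear lower bound. -/
lemma scalar_step {dd m h eps m' : ℝ} (hpos : 0 < dd) (hdm : dd ≤ m) (hh : 0 < h)
    (heps0 : 0 ≤ eps) (hepsd : eps ≤ dd) (hm'0 : 0 ≤ m')
    (hsq : (m + h) ^ 2 - eps ^ 2 * h / m ≤ m' ^ 2) :
    m + h - h * eps ^ 2 / dd ^ 2 ≤ m' := by
  have hmpos : 0 < m := lt_of_lt_of_le hpos hdm
  have he1' : eps ^ 2 * h / m ≤ eps ^ 2 * h / dd :=
    div_le_div_of_nonneg_left (by positivity) hpos hdm
  set A := m + h with hA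
  have hApos : 0 < A := by positivity
  set Cc := eps ^ 2 * h / dd with hCc
  have hCc0 : 0 ≤ Cc := by positivity
  have hCcA : Cc ≤ A ^ 2 := by
    have h1 : eps ^ 2 ≤ dd ^ 2 := pow_le_pow_left₀ heps0 hepsd 2
    have h2 : Cc ≤ dd * h := by
      rw [hCc, div_le_iff₀ hpos]
      nlinarith
    nlinarith [hdm, hh, hpos]
  have hsq2 : (A - Cc / A) ^ 2 ≤ m' ^ 2 := by
    have hexpand : (A - Cc / A) ^ 2 = A ^ 2 - 2 * Cc + (Cc / A) ^ 2 := by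
      field_simp
      ring
    have h4 : (Cc / A) ^ 2 ≤ Cc := by
      rw [div_pow, div_le_iff₀ (by positivity)]
      nlinarith
    linarith [hsq, he1']
  have hAC : 0 ≤ A - Cc / A := by
    rw [sub_nonneg, div_le_iff₀ hApos]
    nlinarith
  have hm'A : A - Cc / A ≤ m' := by nlinarith [hsq2, hm'0, hAC]
  have hCAd : Cc / A ≤ Cc / dd := by
    apply div_le_div_of_nonneg_left hCc0 hpos
    linarith
  have hCcd : Cc / dd = h * eps ^ 2 / dd ^ 2 := by
    rw [hCc]; field_simp
  linarith

section Ray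

variable {E : Type*} [NormedAddCommGroup E] [InnerProductSpace ℝ E] [ProperSpace E]

/-- Along the outward normal ray at `ξ`, the distance to `S` grows linearly
up to `r`. -/
lemma ray_lemma {S : Set E} (hS : IsCompact S) {r : ℝ}
    (hu : ∀ w : E, Metric.infDist w S < r → ∀ p ∈ S, ∀ p' ∈ S,
      dist w p = Metric.infDist w S → dist w p' = Metric.infDist w S → p = p')
    {x ξ : E} (hξ : ξ ∈ S)
    (hd : dist x ξ = Metric.infDist x S) (hpos : 0 < Metric.infDist x S)
    {τ : ℝ} (hτ : 0 < τ) (hτr : Metric.infDist x S + τ < r) :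
    Metric.infDist x S + τ ≤
      Metric.infDist (x + (τ / Metric.infDist x S) • (x - ξ)) S := by
  have hne : S.Nonempty := ⟨ξ, hξ⟩
  set dd := Metric.infDist x S with hdd
  clear_value dd
  apply le_of_forall_sub_le
  intro ε hε
  -- constants
  obtain ⟨C, hC⟩ : ∃ C : ℝ, C = 2 * τ * (dd + τ) / dd := ⟨_, rfl⟩
  have hCpos : 0 < C := by rw [hC]; positivity
  obtain ⟨e1, he1def⟩ : ∃ e1 : ℝ, e1 = min (min (ε / 2) (ε ^ 2 / (4 * C))) τ := ⟨_, rfl⟩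
  have he1pos : 0 < e1 := by
    rw [he1def]
    exact lt_min (lt_min (by positivity) (by positivity)) hτ
  have he1τ : e1 ≤ τ := he1def.le.trans (min_le_right _ _)
  have he1half : e1 ≤ ε / 2 := he1def.le.trans ((min_le_left _ _).trans (min_le_left _ _))
  have he1C : e1 ≤ ε ^ 2 / (4 * C) :=
    he1def.le.trans ((min_le_left _ _).trans (min_le_right _ _))
  obtain ⟨eps, hepsdef⟩ : ∃ eps : ℝ, eps = dd * Real.sqrt (e1 / τ) := ⟨_, rfl⟩
  have heps_pos : 0 < eps := by
    rw [hepsdef]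
    exact mul_pos hpos (Real.sqrt_pos.mpr (by positivity))
  have hepsd : eps ≤ dd := by
    have h1 : Real.sqrt (e1 / τ) ≤ 1 := by
      rw [show (1:ℝ) = Real.sqrt 1 by rw [Real.sqrt_one]]
      exact Real.sqrt_le_sqrt ((div_le_one hτ).mpr he1τ)
    calc eps = dd * Real.sqrt (e1 / τ) := hepsdef
      _ ≤ dd * 1 := mul_le_mul_of_nonneg_left h1 hpos.le
      _ = dd := mul_one _
  have heps_sq : τ * eps ^ 2 / dd ^ 2 = e1 := by
    have h1 : eps ^ 2 = dd ^ 2 * (e1 / τ) := by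
      rw [hepsdef, mul_pow, Real.sq_sqrt (by positivity : (0:ℝ) ≤ e1 / τ)]
    rw [h1]
    field_simp
  -- modulus
  obtain ⟨δ, hδpos, hδ⟩ := modulus hS hu hτ.le (hdd ▸ hτr) heps_pos
  -- step size
  obtain ⟨N, hN1, hNstep⟩ : ∃ N : ℕ, 1 ≤ N ∧ τ / N ≤ δ / 2 := by
    refine ⟨max 1 ⌈τ / (δ / 2)⌉₊, le_max_left _ _, ?_⟩
    have hceil : τ / (δ / 2) ≤ (⌈τ / (δ / 2)⌉₊ : ℝ) := Nat.le_ceil _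
    have hceilN : ((⌈τ / (δ / 2)⌉₊ : ℕ) : ℝ) ≤ ((max 1 ⌈τ / (δ / 2)⌉₊ : ℕ) : ℝ) := by
      exact_mod_cast le_max_right 1 ⌈τ / (δ / 2)⌉₊
    have hNpos : (0:ℝ) < ((max 1 ⌈τ / (δ / 2)⌉₊ : ℕ) : ℝ) := by
      have : (1:ℝ) ≤ ((max 1 ⌈τ / (δ / 2)⌉₊ : ℕ) : ℝ) := by
        exact_mod_cast le_max_left 1 ⌈τ / (δ / 2)⌉₊
      linarith
    rw [div_le_iff₀ hNpos]
    have h1 : τ / (δ / 2) ≤ ((max 1 ⌈τ / (δ / 2)⌉₊ : ℕ) : ℝ) := le_trans hceil hceilN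
    rw [div_le_iff₀ (by positivity : (0:ℝ) < δ / 2)] at h1
    linarith [h1, mul_comm ((max 1 ⌈τ / (δ / 2)⌉₊ : ℕ) : ℝ) (δ / 2)]
  have hNpos : (0:ℝ) < N := by
    have : (1:ℝ) ≤ N := by exact_mod_cast hN1
    linarith
  obtain ⟨h, hh_def⟩ : ∃ h : ℝ, h = τ / N := ⟨_, rfl⟩
  have hh : 0 < h := hh_def ▸ div_pos hτ hNpos
  have hNh : (N:ℝ) * h = τ := by
    rw [hh_def]; field_simp
  have h2δ : 2 * h ≤ δ := by
    rw [hh_def]; linarith [hNstep]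
  -- the Euler polygon
  have hmin : ∀ w : E, ∃ q, q ∈ S ∧ Metric.infDist w S = dist w q := by
    intro w
    obtain ⟨q, hq, hq'⟩ := hS.exists_infDist_eq_dist hne w
    exact ⟨q, hq, hq'⟩
  choose Q hQS hQd using hmin
  obtain ⟨F, hF⟩ : ∃ F : E → E,
      F = fun w => w + (h / Metric.infDist w S) • (w - Q w) := ⟨_, rfl⟩
  obtain ⟨W, hW0, hWs⟩ : ∃ W : ℕ → E, W 0 = x ∧ ∀ k, W (k + 1) = F (W k) :=
    ⟨fun k => F^[k] x, rfl, fun k => Function.iterate_succ_apply' F k x⟩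
  obtain ⟨drop, hdrop⟩ : ∃ drop : ℝ, drop = h - h * eps ^ 2 / dd ^ 2 := ⟨_, rfl⟩
  have hdrop_nonneg : 0 ≤ drop := by
    have h1 : eps ^ 2 / dd ^ 2 ≤ 1 := by
      rw [div_le_one (by positivity)]
      exact pow_le_pow_left₀ heps_pos.le hepsd 2
    have h2 : h * (eps ^ 2 / dd ^ 2) ≤ h * 1 := mul_le_mul_of_nonneg_left h1 hh.le
    have h3 : h * eps ^ 2 / dd ^ 2 = h * (eps ^ 2 / dd ^ 2) := by ring
    rw [hdrop]
    linarith
  have main : ∀ k : ℕ, k ≤ N →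
      dist (W k) x ≤ k * h ∧ dd + k * drop ≤ Metric.infDist (W k) S := by
    intro k
    induction k with
    | zero =>
      intro _
      constructor
      · simp [hW0]
      · simp [hW0, ← hdd]
    | succ k ih =>
      intro hkN
      have hk : k ≤ N := Nat.le_of_succ_le hkN
      obtain ⟨ihd, ihm⟩ := ih hk
      obtain ⟨m, hm⟩ : ∃ m : ℝ, m = Metric.infDist (W k) S := ⟨_, rfl⟩
      rw [← hm] at ihm
      have hkdrop : 0 ≤ (k:ℝ) * drop := mul_nonneg (Nat.cast_nonneg k) hdrop_nonneg
      have hdm : dd ≤ m := by linarith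
      have hmpos : 0 < m := lt_of_lt_of_le hpos hdm
      have hWk_ball : dist (W k) x ≤ τ := by
        have h1 : (k:ℝ) ≤ (N:ℝ) := Nat.cast_le.mpr hk
        have h2 : (k:ℝ) * h ≤ (N:ℝ) * h := mul_le_mul_of_nonneg_right h1 hh.le
        linarith [hNh ▸ h2]
      have hdq : dist (W k) (Q (W k)) = m := by rw [hm]; exact (hQd (W k)).symm
      have hnear : ∀ p ∈ S, dist (W k) p ≤ m + 2 * h → dist p (Q (W k)) ≤ eps := by
        intro p hp hdp
        have hq1 : dist (W k) p ≤ Metric.infDist (W k) S + δ := by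
          rw [← hm]; linarith
        have hq2 : dist (W k) (Q (W k)) ≤ Metric.infDist (W k) S + δ := by
          rw [← hm, hdq]; linarith
        exact hδ (W k) hWk_ball p hp (Q (W k)) (hQS (W k)) hq1 hq2
      have hstep := step_infDist hS hne hmpos hdq hm.symm hh heps_pos.le hnear
      have hW1 : W (k + 1) = W k + (h / m) • (W k - Q (W k)) := by
        rw [hWs k, hF, hm]
      have hsq : (m + h) ^ 2 - eps ^ 2 * h / m ≤ Metric.infDist (W (k + 1)) S ^ 2 := by
        rw [hW1]; exact hstep
      have hstep_scalar : m + h - h * eps ^ 2 / dd ^ 2 ≤ Metric.infDist (W (k + 1)) S :=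
        scalar_step hpos hdm hh heps_pos.le hepsd Metric.infDist_nonneg hsq
      constructor
      · have htri : dist (W (k + 1)) x ≤ dist (W (k + 1)) (W k) + dist (W k) x :=
          dist_triangle _ _ _
        have hstepdist : dist (W (k + 1)) (W k) = h := by
          rw [hW1, dist_eq_norm, add_sub_cancel_left, norm_smul, Real.norm_eq_abs,
            abs_of_pos (div_pos hh hmpos), ← dist_eq_norm, hdq,
            div_mul_cancel₀ _ hmpos.ne']
        push_cast
        push_cast at ihd
        linarith
      · push_cast
        push_cast at ihm ⊢
        linarith [hstep_scalar, ihm, hdrop]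
  -- conclusion of the polygon construction
  have hWfin : ∃ w : E, dist w x ≤ τ ∧ dd + τ - e1 ≤ Metric.infDist w S := by
    obtain ⟨hdistN, hinfN⟩ := main N le_rfl
    refine ⟨W N, by rw [← hNh]; exact hdistN, ?_⟩
    have h1 : (N:ℝ) * drop = τ - τ * eps ^ 2 / dd ^ 2 := by
      rw [hdrop]
      have h2 : (N:ℝ) * (h - h * eps ^ 2 / dd ^ 2)
          = (N:ℝ) * h - ((N:ℝ) * h) * eps ^ 2 / dd ^ 2 := by ring
      rw [h2, hNh]
    rw [heps_sq] at h1
    linarith [h1 ▸ hinfN]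
  clear main hWs hW0 hF W F hQS hQd Q hdrop_nonneg hdrop drop hNh h2δ hh hh_def h hδ hδpos δ hNpos hN1 hNstep N
  obtain ⟨w, hW_dist, hW_inf⟩ := hWfin
  -- geometry: the endpoint is near the ray point
  obtain ⟨zt, hzt⟩ : ∃ zt : E, zt = x + (τ / dd) • (x - ξ) := ⟨_, rfl⟩
  have hxin : ‖x - ξ‖ = dd := by rw [← dist_eq_norm]; exact hd
  have ha : ‖w - x‖ ≤ τ := by rw [← dist_eq_norm]; exact hW_dist
  have ha0 : 0 ≤ ‖w - x‖ := norm_nonneg _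
  have hwξ : dd + τ - e1 ≤ ‖w - ξ‖ := by
    refine le_trans hW_inf ?_
    rw [← dist_eq_norm]
    exact Metric.infDist_le_dist_of_mem hξ
  have hexp1 : ‖w - ξ‖ ^ 2 = ‖w - x‖ ^ 2 + 2 * ⟪w - x, x - ξ⟫ + dd ^ 2 := by
    have h1 : w - ξ = (w - x) + (x - ξ) := by abel
    rw [h1, norm_add_sq_real, hxin]
  have hsm : ‖(τ / dd) • (x - ξ)‖ = τ := by
    rw [norm_smul, Real.norm_eq_abs, abs_of_nonneg (by positivity : (0:ℝ) ≤ τ / dd),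
      hxin, div_mul_cancel₀ _ hpos.ne']
  have hexp2 : ‖w - zt‖ ^ 2
      = ‖w - x‖ ^ 2 - 2 * ((τ / dd) * ⟪w - x, x - ξ⟫) + τ ^ 2 := by
    have h1 : w - zt = (w - x) - (τ / dd) • (x - ξ) := by rw [hzt]; abel
    rw [h1, norm_sub_sq_real, real_inner_smul_right, hsm]
  have hkey : ‖w - zt‖ ^ 2 ≤ C * e1 := by
    have hg : (τ / dd) * dd = τ := div_mul_cancel₀ _ hpos.ne'
    have hgpos : 0 ≤ τ / dd := by positivity
    have hC' : C * e1 = 2 * (τ / dd) * (dd + τ) * e1 := by rw [hC]; ring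
    have hwξ0 : 0 ≤ dd + τ - e1 := by linarith [hpos]
    have hwξ2 : (dd + τ - e1) ^ 2 ≤ ‖w - ξ‖ ^ 2 := pow_le_pow_left₀ hwξ0 hwξ 2
    have ha2 : ‖w - x‖ ^ 2 ≤ τ ^ 2 := pow_le_pow_left₀ ha0 ha 2
    have hIg : 2 * ((τ / dd) * ⟪w - x, x - ξ⟫)
        = (τ / dd) * ‖w - ξ‖ ^ 2 - (τ / dd) * ‖w - x‖ ^ 2 - (τ / dd) * dd ^ 2 := by
      linear_combination (-(τ / dd)) * hexp1
    have hP1 : (τ / dd) * ((dd + τ - e1) ^ 2) ≤ (τ / dd) * ‖w - ξ‖ ^ 2 :=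
      mul_le_mul_of_nonneg_left hwξ2 hgpos
    have hP2 : (τ / dd) * ‖w - x‖ ^ 2 ≤ (τ / dd) * τ ^ 2 :=
      mul_le_mul_of_nonneg_left ha2 hgpos
    have hP3 : 0 ≤ (τ / dd) * e1 ^ 2 := mul_nonneg hgpos (sq_nonneg _)
    have hgτ2 : (τ / dd) * dd * τ = τ ^ 2 := by rw [hg]; ring
    rw [hC']
    linarith [hexp2, hIg, hP1, hP2, hP3, ha2, hgτ2]
  have hwzt : ‖w - zt‖ ≤ ε / 2 := by
    have h1 : ‖w - zt‖ = Real.sqrt (‖w - zt‖ ^ 2) := (Real.sqrt_sq (norm_nonneg _)).symm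
    have h2 : C * e1 ≤ ε ^ 2 / 4 := by
      have h4 : C * e1 ≤ C * (ε ^ 2 / (4 * C)) := mul_le_mul_of_nonneg_left he1C hCpos.le
      have h5 : C * (ε ^ 2 / (4 * C)) = ε ^ 2 / 4 := by field_simp
      linarith
    calc ‖w - zt‖ = Real.sqrt (‖w - zt‖ ^ 2) := h1
      _ ≤ Real.sqrt (ε ^ 2 / 4) := Real.sqrt_le_sqrt (le_trans hkey h2)
      _ = ε / 2 := by
          rw [show ε ^ 2 / 4 = (ε / 2) ^ 2 by ring, Real.sqrt_sq (by linarith)]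
  -- wrap up
  have htri : Metric.infDist w S ≤
      Metric.infDist (x + (τ / dd) • (x - ξ)) S + dist w (x + (τ / dd) • (x - ξ)) :=
    Metric.infDist_le_infDist_add_dist
  have hdzt : dist w (x + (τ / dd) • (x - ξ)) = ‖w - zt‖ := by
    rw [dist_eq_norm, hzt]
  linarith [hW_inf, htri, hdzt ▸ htri, he1half, hwzt]

end Ray

theorem normal_ball_misses_set {d : ℕ} {S : Set (EuclideanSpace ℝ (Fin d))} {r : ℝ}
    (hS : IsCompact S) (hr : 0 < r) (hreach : ReachGe S r)
    {x ξ : EuclideanSpace ℝ (Fin d)} (hx : x ∉ S)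
    (hpos : 0 < Metric.infDist x S) (hlt : Metric.infDist x S < r)
    (hξ : ξ ∈ S) (hproj : dist x ξ = Metric.infDist x S) :
    x ∈ Metric.ball (ξ + (r / ‖x - ξ‖) • (x - ξ)) r ∧
      Metric.ball (ξ + (r / ‖x - ξ‖) • (x - ξ)) r ∩ S = ∅ := by
  have hu : ∀ w : EuclideanSpace ℝ (Fin d), Metric.infDist w S < r → ∀ p ∈ S, ∀ p' ∈ S,
      dist w p = Metric.infDist w S → dist w p' = Metric.infDist w S → p = p' := by
    intro w hw p hp p' hp' h1 h2
    obtain ⟨u, -, hu2⟩ := hreach w hw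
    rw [hu2 p ⟨hp, h1⟩, hu2 p' ⟨hp', h2⟩]
  have hnx : ‖x - ξ‖ = Metric.infDist x S := by rw [← dist_eq_norm]; exact hproj
  have hnx0 : 0 < ‖x - ξ‖ := by rw [hnx]; exact hpos
  constructor
  · -- x is in the open ball
    rw [mem_ball, dist_eq_norm]
    have hxy : x - (ξ + (r / ‖x - ξ‖) • (x - ξ)) = (1 - r / ‖x - ξ‖) • (x - ξ) := by
      rw [sub_smul, one_smul]
      abel
    have h1 : (1:ℝ) < r / ‖x - ξ‖ := (one_lt_div hnx0).mpr (by rw [hnx]; exact hlt)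
    have hmul : (r / ‖x - ξ‖) * ‖x - ξ‖ = r := div_mul_cancel₀ _ hnx0.ne'
    rw [hxy, norm_smul, Real.norm_eq_abs, abs_of_neg (by linarith : 1 - r / ‖x - ξ‖ < 0)]
    nlinarith [hnx0]
  · -- the open ball misses S
    rw [eq_empty_iff_forall_notMem]
    rintro p ⟨hpb, hpS⟩
    rw [mem_ball] at hpb
    have hfar : r ≤ dist p (ξ + (r / ‖x - ξ‖) • (x - ξ)) := by
      apply le_of_forall_sub_le
      intro ε hε
      set dd := Metric.infDist x S with hdd
      -- choose a radius ρ close to r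
      set ρ := max (r - ε / 2) ((dd + r) / 2) with hρ
      have hρr : ρ < r := max_lt (by linarith) (by linarith)
      have hρd : dd < ρ := lt_of_lt_of_le (by linarith : dd < (dd + r) / 2) (le_max_right _ _)
      have hρε : r - ε / 2 ≤ ρ := le_max_left _ _
      have hτpos : 0 < ρ - dd := by linarith
      have hτr : dd + (ρ - dd) < r := by linarith
      have hray := ray_lemma hS hu hξ hproj hpos hτpos hτr
      -- hray : dd + (ρ - dd) ≤ infDist (x + ((ρ - dd)/dd) • (x - ξ)) S
      have hzp : ρ ≤ dist (x + ((ρ - dd) / dd) • (x - ξ)) p := by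
        have h1 : Metric.infDist (x + ((ρ - dd) / dd) • (x - ξ)) S
            ≤ dist (x + ((ρ - dd) / dd) • (x - ξ)) p := Metric.infDist_le_dist_of_mem hpS
        have h2 : dd + (ρ - dd) = ρ := by ring
        rw [← hdd] at hray
        linarith [hray, h1]
      -- the center of the ball is at distance r - ρ from the ray point
      have hyz : dist (ξ + (r / ‖x - ξ‖) • (x - ξ)) (x + ((ρ - dd) / dd) • (x - ξ))
          = r - ρ := by
        have hcoef : (r - ρ) / dd = r / dd - (ρ - dd) / dd - 1 := by
          field_simp
          ring
        have hv : (ξ + (r / dd) • (x - ξ)) - (x + ((ρ - dd) / dd) • (x - ξ))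
            = ((r - ρ) / dd) • (x - ξ) := by
          rw [hcoef, sub_smul, sub_smul, one_smul]
          abel
        rw [dist_eq_norm, hnx, hv, norm_smul, Real.norm_eq_abs,
          abs_of_nonneg (div_nonneg (by linarith) hpos.le), hnx,
          div_mul_cancel₀ _ hpos.ne']
      have htri : dist (x + ((ρ - dd) / dd) • (x - ξ)) p
          ≤ dist p (ξ + (r / ‖x - ξ‖) • (x - ξ))
            + dist (ξ + (r / ‖x - ξ‖) • (x - ξ)) (x + ((ρ - dd) / dd) • (x - ξ)) := by
        rw [dist_comm (x + ((ρ - dd) / dd) • (x - ξ)) p]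
        exact dist_triangle _ _ _
      linarith [hzp, htri, hyz ▸ htri]
    linarith [hfar, dist_comm p (ξ + (r / ‖x - ξ‖) • (x - ξ)) ▸ hpb]
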